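/- Under the same hypotheses (ρA(θ)ρ = -A(-θ), exp(Ā) = Φ(1), Ā ∈ Ω with exp injective on Ω, -Ω ⊆ Ω, ρΩρ ⊆ Ω), the averaging map v(u,τ) = exp(Āτ)Φ(τ)⁻¹u satisfies v(ρu, -τ) = ρ v(u, τ) for all u ∈ ℝⁿ and τ ∈ ℝ; i.e., the averaging change of variables commutes with the reversibility map R(u,τ) = (ρu, -τ). -/

import Mathlib

open Matrix NormedSpace

attribute [local instance] Matrix.normedAddCommGroup Matrix.normedSpace

noncomputable def mulCLM (n : ℕ) :
    Matrix (Fin n) (Fin n) ℝ →L[ℝ] Matrix (Fin n) (Fin n) ℝ →L[ℝ] Matrix (Fin n) (Fin n) ℝ :=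
  LinearMap.toContinuousLinearMap <|
  { toFun := fun X => LinearMap.toContinuousLinearMap (LinearMap.mulLeft ℝ X)
    map_add' := fun X Y => by ext Z; simp [Matrix.add_mul]
    map_smul' := fun c X => by ext Z; simp [Matrix.smul_mul] }

@[simp] lemma mulCLM_apply {n : ℕ} (X Y : Matrix (Fin n) (Fin n) ℝ) : mulCLM n X Y = X * Y := by
  simp [mulCLM]

noncomputable instance instSNACGMatCLM (n : ℕ) :
    SeminormedAddCommGroup (Matrix (Fin n) (Fin n) ℝ →L[ℝ] Matrix (Fin n) (Fin n) ℝ) :=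
  @ContinuousLinearMap.toSeminormedAddCommGroup ℝ ℝ (Matrix (Fin n) (Fin n) ℝ) (Matrix (Fin n) (Fin n) ℝ)
    Matrix.normedAddCommGroup.toSeminormedAddCommGroup Matrix.normedAddCommGroup.toSeminormedAddCommGroup
    _ _ Matrix.normedSpace Matrix.normedSpace (RingHom.id ℝ) _

noncomputable instance instNSMatCLM (n : ℕ) :
    NormedSpace ℝ (Matrix (Fin n) (Fin n) ℝ →L[ℝ] Matrix (Fin n) (Fin n) ℝ) :=
  @ContinuousLinearMap.toNormedSpace ℝ ℝ (Matrix (Fin n) (Fin n) ℝ) (Matrix (Fin n) (Fin n) ℝ)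
    Matrix.normedAddCommGroup.toSeminormedAddCommGroup Matrix.normedAddCommGroup.toSeminormedAddCommGroup
    _ _ Matrix.normedSpace Matrix.normedSpace (RingHom.id ℝ) _ ℝ _ Matrix.normedSpace _

noncomputable instance instSNACGMatCLM2 (n : ℕ) :
    SeminormedAddCommGroup (Matrix (Fin n) (Fin n) ℝ →L[ℝ] Matrix (Fin n) (Fin n) ℝ →L[ℝ]
      Matrix (Fin n) (Fin n) ℝ) :=
  @ContinuousLinearMap.toSeminormedAddCommGroup ℝ ℝ (Matrix (Fin n) (Fin n) ℝ)
    (Matrix (Fin n) (Fin n) ℝ →L[ℝ] Matrix (Fin n) (Fin n) ℝ)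
    Matrix.normedAddCommGroup.toSeminormedAddCommGroup (instSNACGMatCLM n)
    _ _ Matrix.normedSpace (instNSMatCLM n) (RingHom.id ℝ) _

/-- Uniqueness for the linear ODE `Y' = A τ * Y`. -/
lemma linear_ODE_unique {n : ℕ} (A : ℝ → Matrix (Fin n) (Fin n) ℝ) (hA : Continuous A)
    (f g : ℝ → Matrix (Fin n) (Fin n) ℝ)
    (hf : ∀ τ, HasDerivAt f (A τ * f τ) τ)
    (hg : ∀ τ, HasDerivAt g (A τ * g τ) τ)
    (h0 : f 0 = g 0) : ∀ τ, f τ = g τ := by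
  intro t
  set a : ℝ := -(|t| + 1) with ha
  set b : ℝ := |t| + 1 with hb
  have habs : (0:ℝ) ≤ |t| := abs_nonneg t
  set proj : ℝ → ℝ := fun τ => max a (min b τ) with hprojdef
  have hprojmem : ∀ τ, proj τ ∈ Set.Icc a b := by
    intro τ
    refine ⟨le_max_left _ _, max_le (by simp [ha, hb]; linarith) (min_le_left _ _)⟩
  have hprojeq : ∀ τ ∈ Set.Icc a b, proj τ = τ := by
    intro τ hτ
    simp only [hprojdef]
    rw [min_eq_right hτ.2, max_eq_right hτ.1]
  set A' : ℝ → Matrix (Fin n) (Fin n) ℝ := fun τ => A (proj τ) with hA'def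
  obtain ⟨C, hC⟩ := (isCompact_Icc (a := a) (b := b)).exists_bound_of_continuousOn
    hA.continuousOn
  set K : NNReal := ‖mulCLM n‖₊ * C.toNNReal with hK
  have hlip : ∀ τ : ℝ, LipschitzOnWith K (fun Y => A' τ * Y)
      (Set.univ : Set (Matrix (Fin n) (Fin n) ℝ)) := by
    intro τ
    have h1 : LipschitzWith ‖mulCLM n (A' τ)‖₊ (mulCLM n (A' τ)) :=
      (mulCLM n (A' τ)).lipschitz
    have h2 : ‖mulCLM n (A' τ)‖₊ ≤ K := by
      refine le_trans ((mulCLM n).le_opNNNorm (A' τ)) (mul_le_mul_right ?_ _)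
      rw [← Real.toNNReal_coe (r := ‖A' τ‖₊), coe_nnnorm]
      exact Real.toNNReal_mono (hC _ (hprojmem τ))
    have h3 := (h1.weaken h2).lipschitzOnWith
      (s := (Set.univ : Set (Matrix (Fin n) (Fin n) ℝ)))
    have hfun : (fun Y : Matrix (Fin n) (Fin n) ℝ => A' τ * Y) = ⇑(mulCLM n (A' τ)) := by
      funext Y; simp
    rw [hfun]
    exact h3
  have ht0 : (0:ℝ) ∈ Set.Ioo a b := by constructor <;> [simp [ha]; simp [hb]] <;> linarith
  have hmemected : t ∈ Set.Ioo a b := by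
    constructor
    · have := neg_abs_le t; simp only [ha]; linarith
    · have := le_abs_self t; simp only [hb]; linarith
  have key : Set.EqOn f g (Set.Ioo a b) := by
    refine ODE_solution_unique_of_mem_Ioo (v := fun τ Y => A' τ * Y)
      (s := fun _ => Set.univ) (fun τ _ => hlip τ) ht0 ?_ ?_ h0
    · intro τ hτ
      refine ⟨?_, Set.mem_univ _⟩
      have : A' τ = A τ := by rw [hA'def]; simp only; rw [hprojeq τ (Set.Ioo_subset_Icc_self hτ)]
      rw [this]; exact hf τ
    · intro τ hτ
      refine ⟨?_, Set.mem_univ _⟩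
      have : A' τ = A τ := by rw [hA'def]; simp only; rw [hprojeq τ (Set.Ioo_subset_Icc_self hτ)]
      rw [this]; exact hg τ
  exact key hmemected

lemma hasDerivAt_matmul_left {n : ℕ} {F : ℝ → Matrix (Fin n) (Fin n) ℝ}
    {F' : Matrix (Fin n) (Fin n) ℝ} {τ : ℝ} (c : Matrix (Fin n) (Fin n) ℝ)
    (h : HasDerivAt F F' τ) : HasDerivAt (fun t => c * F t) (c * F') τ := by
  have h2 := ((mulCLM n c).hasFDerivAt (x := F τ)).comp_hasDerivAt τ h
  simp only [Function.comp_def, mulCLM_apply] at h2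
  exact h2

lemma hasDerivAt_matmul_right {n : ℕ} {F : ℝ → Matrix (Fin n) (Fin n) ℝ}
    {F' : Matrix (Fin n) (Fin n) ℝ} {τ : ℝ} (c : Matrix (Fin n) (Fin n) ℝ)
    (h : HasDerivAt F F' τ) : HasDerivAt (fun t => F t * c) (F' * c) τ := by
  have h2 := (((mulCLM n).flip c).hasFDerivAt (x := F τ)).comp_hasDerivAt τ h
  simp only [Function.comp_def, ContinuousLinearMap.flip_apply, mulCLM_apply] at h2
  exact h2

/-- Under the reversibility hypotheses, the averaging change of variables
`v(u,τ) = exp(Ā τ) Φ(τ)⁻¹ u` commutes with the reversibility map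
`R(u,τ) = (ρ u, -τ)`, i.e. `v(ρ u, -τ) = ρ v(u, τ)`. -/
theorem stmt_6 (n : ℕ)
    (A : ℝ → Matrix (Fin n) (Fin n) ℝ)
    (hA : Continuous A)
    (hAper : ∀ τ, A (τ + 1) = A τ)
    (ρ : Matrix (Fin n) (Fin n) ℝ)
    (hρ : ρ * ρ = 1)
    (hrev : ∀ θ : ℝ, ρ * A θ * ρ = -A (-θ))
    (Φ : ℝ → Matrix (Fin n) (Fin n) ℝ)
    (hΦ : ∀ τ, HasDerivAt Φ (A τ * Φ τ) τ)
    (hΦ0 : Φ 0 = 1)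
    (Ω : Set (Matrix (Fin n) (Fin n) ℝ))
    (hinj : Set.InjOn (exp) Ω)
    (hneg : ∀ X ∈ Ω, -X ∈ Ω)
    (hconj : ∀ X ∈ Ω, ρ * X * ρ ∈ Ω)
    (Abar : Matrix (Fin n) (Fin n) ℝ)
    (hmem : Abar ∈ Ω)
    (hAbar : exp Abar = Φ 1)
    (v : (Fin n → ℝ) → ℝ → Fin n → ℝ)
    (hv : ∀ (u : Fin n → ℝ) (τ : ℝ),
      v u τ = (exp (τ • Abar) * (Φ τ)⁻¹) *ᵥ u) :
    ∀ (u : Fin n → ℝ) (τ : ℝ), v (ρ *ᵥ u) (-τ) = ρ *ᵥ v u τ := by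
  have hρ' : ∀ Z : Matrix (Fin n) (Fin n) ℝ, ρ * (ρ * Z) = Z := fun Z => by
    rw [← mul_assoc, hρ, one_mul]
  have hρinv : ρ⁻¹ = ρ := Matrix.inv_eq_left_inv hρ
  have hρunit : IsUnit ρ := ⟨⟨ρ, ρ, hρ, hρ⟩, rfl⟩
  -- symmetry: ρ Φ(-τ) ρ = Φ τ
  have hsym : ∀ τ, ρ * Φ (-τ) * ρ = Φ τ := by
    refine linear_ODE_unique A hA _ Φ ?_ hΦ (by simp [hΦ0, hρ])
    intro τ
    have hneg' : HasDerivAt (fun τ : ℝ => Φ (-τ)) ((-1 : ℝ) • (A (-τ) * Φ (-τ))) τ := by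
      have := (hΦ (-τ)).scomp τ (hasDerivAt_neg τ)
      simp at this ⊢; exact this
    have hd := hasDerivAt_matmul_right ρ (hasDerivAt_matmul_left ρ hneg')
    convert hd using 1
    have h := hrev (-τ)
    rw [neg_neg] at h
    have e : A τ * ρ = -(ρ * A (-τ)) := by
      have : (ρ * A (-τ) * ρ) * ρ = (-A τ) * ρ := by rw [h]
      rw [mul_assoc, hρ, mul_one] at this
      rw [this]; simp
    calc A τ * (ρ * Φ (-τ) * ρ) = (A τ * ρ) * Φ (-τ) * ρ := by
          simp only [mul_assoc]
      _ = -(ρ * A (-τ)) * Φ (-τ) * ρ := by rw [e]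
      _ = ρ * ((-1 : ℝ) • (A (-τ) * Φ (-τ))) * ρ := by
          simp [mul_assoc]
  -- shift: Φ(τ+1) = Φ τ * Φ 1
  have hshift : ∀ τ, Φ (τ + 1) = Φ τ * Φ 1 := by
    refine linear_ODE_unique A hA _ _ ?_ ?_ (by simp [hΦ0])
    · intro τ
      have h1 : HasDerivAt (fun τ : ℝ => τ + 1) 1 τ := (hasDerivAt_id τ).add_const 1
      have := (hΦ (τ + 1)).scomp τ h1
      simp [hAper] at this ⊢; exact this
    · intro τ
      have := hasDerivAt_matmul_right (Φ 1) (hΦ τ)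
      simp [mul_assoc] at this ⊢; exact this
  have hinv1 : Φ (-1) * Φ 1 = 1 := by
    have := hshift (-1)
    rw [neg_add_cancel, hΦ0] at this
    exact this.symm
  have hΦ1inv : (Φ 1)⁻¹ = Φ (-1) := Matrix.inv_eq_left_inv hinv1
  -- conjugation of Abar
  have hexpconj : ∀ X : Matrix (Fin n) (Fin n) ℝ,
      exp (ρ * X * ρ) = ρ * exp X * ρ := by
    intro X
    have h := Matrix.exp_conj ρ X hρunit
    rwa [hρinv] at h
  have hconjA : ρ * Abar * ρ = -Abar := by
    refine hinj (hconj _ hmem) (hneg _ hmem) ?_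
    calc exp (ρ * Abar * ρ) = ρ * exp Abar * ρ := hexpconj Abar
      _ = ρ * Φ 1 * ρ := by rw [hAbar]
      _ = Φ (-1) := by have := hsym (-1); rw [neg_neg] at this; exact this
      _ = (Φ 1)⁻¹ := hΦ1inv.symm
      _ = (exp Abar)⁻¹ := by rw [hAbar]
      _ = exp (-Abar) := (Matrix.exp_neg Abar).symm
  -- main computation
  intro u τ
  rw [hv, hv, Matrix.mulVec_mulVec, Matrix.mulVec_mulVec]
  have hΦneg : Φ (-τ) = ρ * Φ τ * ρ := by
    conv_rhs => rw [← hsym τ]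
    simp only [mul_assoc, hρ', hρ, mul_one]
  have hΦneginv : (Φ (-τ))⁻¹ = ρ * (Φ τ)⁻¹ * ρ := by
    rw [hΦneg, Matrix.mul_inv_rev, Matrix.mul_inv_rev, hρinv, mul_assoc]
  have hexpneg : exp ((-τ) • Abar) = ρ * exp (τ • Abar) * ρ := by
    have hsmul : (-τ) • Abar = ρ * (τ • Abar) * ρ := by
      rw [Matrix.mul_smul, Matrix.smul_mul, hconjA, smul_neg, neg_smul]
    rw [hsmul, hexpconj]
  rw [hexpneg, hΦneginv]
  simp only [mul_assoc, hρ', hρ, mul_one]
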